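/- Suppose the zeros a_1,…,a_N of W_N inside Σ_N are pairwise distinct (and simple zeros of W_N). Then the biorthogonality relations ∫_ℝ e^{a_m x} ψ_k(e^x) dx = δ_{mk} hold for all k, m = 1,…,N, where ψ_m(y) = (2πi W_N'(a_m))^{-1} ∫_{ℓ_N} W_N(v) y^{-v} (v - a_m)^{-1} dv; these integrals converge absolutely since ψ_m(e^x) = O(e^{-(α_N+δ)x}) as x → -∞ and ψ_m(e^x) = O(e^{-(β_N-δ)x}) as x → +∞ for every δ > 0. -/

import Mathlib

/-!
Statement 1: under Assumption 1, with pairwise distinct simple zeros `a_1,…,a_N` of `W`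
inside `Σ_N`, the biorthogonality relations `∫_ℝ e^{a_m x} ψ_k(e^x) dx = δ_{mk}` hold;
the integrals converge absolutely since `ψ_m(e^x) = O(e^{-(α+δ)x})` as `x → -∞` and
`ψ_m(e^x) = O(e^{-(β-δ)x})` as `x → +∞`, for every `δ > 0`.
-/

open MeasureTheory Complex

noncomputable section

/-- Integral of `f` along the parametrized loop `γ` (parameter interval `[0,1]`). -/
def loopIntegral (γ : ℝ → ℂ) (f : ℂ → ℂ) : ℂ :=
  ∫ s in (0:ℝ)..1, f (γ s) * deriv γ s

/-- Integral of `f` along the upward-oriented vertical line `Re z = c`. -/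
def lineIntegral (c : ℝ) (f : ℂ → ℂ) : ℂ :=
  Complex.I * ∫ t : ℝ, f (c + t * Complex.I)

/-- Winding number of the loop `γ` around `z`. -/
def windingNumber (γ : ℝ → ℂ) (z : ℂ) : ℂ :=
  (2 * (Real.pi : ℂ) * Complex.I)⁻¹ * loopIntegral γ (fun w => (w - z)⁻¹)

/-- `ψ_m(y) = (2πi W'(a))⁻¹ ∫_{ℓ_N} W(v) y^{-v} (v - a)⁻¹ dv`. -/
def psiFun (c : ℝ) (W : ℂ → ℂ) (a : ℂ) (y : ℝ) : ℂ :=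
  (2 * (Real.pi : ℂ) * Complex.I * deriv W a)⁻¹ *
    lineIntegral c (fun v => W v * (y : ℂ) ^ (-v) / (v - a))

open Set Filter Topology

/-- compatibility: the complex absolute value as the norm -/
def Complex.abs : AbsoluteValue ℂ ℝ where
  toFun z := ‖z‖
  map_mul' := norm_mul
  nonneg' := norm_nonneg
  eq_zero' _ := norm_eq_zero
  add_le' := norm_add_le

lemma Complex.norm_eq_abs (z : ℂ) : ‖z‖ = Complex.abs z := rfl

lemma Complex.abs_exp (z : ℂ) : Complex.abs (Complex.exp z) = Real.exp z.re := Complex.norm_exp z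

lemma Complex.abs_I : Complex.abs Complex.I = 1 := Complex.norm_I

lemma Complex.abs_im_le_abs (z : ℂ) : |z.im| ≤ Complex.abs z := Complex.abs_im_le_norm z

namespace Biorth


/-- the open vertical strip -/
def S (α β : ℝ) : Set ℂ := {z | α < z.re ∧ z.re < β}

lemma isOpen_S (α β : ℝ) : IsOpen (S α β) :=
  IsOpen.preimage Complex.continuous_re isOpen_Ioo

/-- parametrization of vertical line -/
def line (c t : ℝ) : ℂ := (c : ℂ) + (t : ℂ) * Complex.I

@[simp] lemma line_re (c t : ℝ) : (line c t).re = c := by simp [line]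
@[simp] lemma line_im (c t : ℝ) : (line c t).im = t := by simp [line]

lemma line_mem_S {α β c : ℝ} (h1 : α < c) (h2 : c < β) (t : ℝ) : line c t ∈ S α β := by
  simp [S, h1, h2]

lemma abs_le_abs_line (c t : ℝ) : |t| ≤ Complex.abs (line c t) := by
  simpa using Complex.abs_im_le_abs (line c t)

lemma continuous_line (c : ℝ) : Continuous (line c) := by
  unfold line; continuity

lemma continuous_comp_line {α β c : ℝ} {f : ℂ → ℂ} (hf : ContinuousOn f (S α β))
    (h1 : α < c) (h2 : c < β) : Continuous (fun t => f (line c t)) :=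
  hf.comp_continuous (continuous_line c) (line_mem_S h1 h2)

/-- power decay on a set -/
def DecayOn (s : Set ℂ) (f : ℂ → ℂ) (κ : ℝ) : Prop :=
  ∃ M R : ℝ, 0 ≤ M ∧ 1 ≤ R ∧
    ∀ z ∈ s, R ≤ Complex.abs z → Complex.abs (f z) ≤ M * Complex.abs z ^ (-κ)

lemma DecayOn.of_bound {α β : ℝ} {f : ℂ → ℂ} {κ M R : ℝ}
    (h : ∀ z : ℂ, α < z.re → z.re < β → R ≤ Complex.abs z →
      Complex.abs (f z) ≤ M * Complex.abs z ^ (-κ)) :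
    DecayOn (S α β) f κ := by
  refine ⟨max M 0, max R 1, le_max_right _ _, le_max_right _ _, fun z hz hR => ?_⟩
  refine (h z hz.1 hz.2 (le_trans (le_max_left _ _) hR)).trans ?_
  have : (0:ℝ) ≤ Complex.abs z ^ (-κ) := Real.rpow_nonneg (Complex.abs.nonneg z) _
  exact mul_le_mul_of_nonneg_right (le_max_left _ _) this

lemma DecayOn.mul_bounded {s : Set ℂ} {f h : ℂ → ℂ} {κ K : ℝ}
    (hf : DecayOn s f κ) (hK : 0 ≤ K) (hh : ∀ z ∈ s, Complex.abs (h z) ≤ K) :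
    DecayOn s (fun z => f z * h z) κ := by
  obtain ⟨M, R, hM, hR, hbd⟩ := hf
  refine ⟨M * K, R, mul_nonneg hM hK, hR, fun z hz hRz => ?_⟩
  rw [map_mul]
  calc Complex.abs (f z) * Complex.abs (h z)
      ≤ (M * Complex.abs z ^ (-κ)) * K := by
        exact mul_le_mul (hbd z hz hRz) (hh z hz)
          (Complex.abs.nonneg _) (by positivity)
    _ = M * K * Complex.abs z ^ (-κ) := by ring

lemma ne_of_abs_gt {z b : ℂ} (h : 2 * Complex.abs b + 1 ≤ Complex.abs z) : z ≠ b := by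
  intro h'; subst h'; nlinarith [Complex.abs.nonneg z]

lemma abs_sub_ge {z b : ℂ} (h : 2 * Complex.abs b + 1 ≤ Complex.abs z) :
    Complex.abs z / 2 ≤ Complex.abs (z - b) := by
  have h1 : Complex.abs z - Complex.abs b ≤ Complex.abs (z - b) := by
    simpa [Complex.norm_eq_abs] using norm_sub_norm_le z b
  have : Complex.abs b ≤ Complex.abs z / 2 := by nlinarith [Complex.abs.nonneg b]
  linarith

lemma DecayOn.div_sub {α β : ℝ} {f : ℂ → ℂ} {κ : ℝ} (hf : DecayOn (S α β) f κ) (u : ℂ) :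
    DecayOn (S α β) (fun z => f z * (z - u)⁻¹) (κ + 1) := by
  obtain ⟨M, R, hM, hR, hbd⟩ := hf
  refine ⟨2 * M, max R (2 * Complex.abs u + 1), by positivity,
    le_trans hR (le_max_left _ _), fun z hz hRz => ?_⟩
  have hz0 : (0:ℝ) < Complex.abs z := lt_of_lt_of_le (by positivity) (le_trans (le_max_right _ _) hRz)
  have hzu : Complex.abs z / 2 ≤ Complex.abs (z - u) := abs_sub_ge (le_trans (le_max_right _ _) hRz)
  have hzu0 : (0:ℝ) < Complex.abs (z - u) := lt_of_lt_of_le (by positivity) hzu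
  rw [map_mul, map_inv₀]
  calc Complex.abs (f z) * (Complex.abs (z - u))⁻¹
      ≤ (M * Complex.abs z ^ (-κ)) * (Complex.abs z / 2)⁻¹ := by
        refine mul_le_mul (hbd z hz (le_trans (le_max_left _ _) hRz)) ?_ (by positivity) (by positivity)
        exact inv_anti₀ (by positivity) hzu
    _ = 2 * M * (Complex.abs z ^ (-κ) * (Complex.abs z)⁻¹) := by
        rw [inv_div]; ring
    _ = 2 * M * Complex.abs z ^ (-(κ+1)) := by
        rw [← Real.rpow_neg_one (Complex.abs z), ← Real.rpow_add hz0]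
        congr 1
        ring

lemma DecayOn.dslope_zero {α β : ℝ} {f : ℂ → ℂ} {κ : ℝ} (hf : DecayOn (S α β) f κ)
    {b : ℂ} (hb : f b = 0) : DecayOn (S α β) (dslope f b) (κ + 1) := by
  obtain ⟨M, R, hM, hR, hbd⟩ := (hf.div_sub b)
  refine ⟨M, max R (2 * Complex.abs b + 1), hM, le_trans hR (le_max_left _ _),
    fun z hz hRz => ?_⟩
  have hzb : z ≠ b := ne_of_abs_gt (le_trans (le_max_right _ _) hRz)
  rw [dslope_of_ne f hzb, slope_def_field, hb, sub_zero, div_eq_mul_inv]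
  exact hbd z hz (le_trans (le_max_left _ _) hRz)

lemma DecayOn.dslope_gen {α β : ℝ} {f : ℂ → ℂ} {κ : ℝ} (hκ : 0 ≤ κ)
    (hf : DecayOn (S α β) f κ) (b : ℂ) : DecayOn (S α β) (dslope f b) 1 := by
  obtain ⟨M, R, hM, hR, hbd⟩ := hf
  refine ⟨2 * (M + Complex.abs (f b)), max R (2 * Complex.abs b + 1), by positivity,
    le_trans hR (le_max_left _ _), fun z hz hRz => ?_⟩
  have hz1 : (1:ℝ) ≤ Complex.abs z := le_trans hR (le_trans (le_max_left _ _) hRz)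
  have hz0 : (0:ℝ) < Complex.abs z := lt_of_lt_of_le one_pos hz1
  have hzb' : Complex.abs z / 2 ≤ Complex.abs (z - b) := abs_sub_ge (le_trans (le_max_right _ _) hRz)
  have hzb0 : (0:ℝ) < Complex.abs (z - b) := lt_of_lt_of_le (by positivity) hzb'
  have hzb : z ≠ b := ne_of_abs_gt (le_trans (le_max_right _ _) hRz)
  rw [dslope_of_ne f hzb, slope_def_field, div_eq_mul_inv, map_mul, map_inv₀]
  have h1 : Complex.abs (f z - f b) ≤ M + Complex.abs (f b) := by
    refine (Complex.abs.sub_le_add _ _).trans ?_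
    have : Complex.abs (f z) ≤ M * Complex.abs z ^ (-κ) :=
      hbd z hz (le_trans (le_max_left _ _) hRz)
    have h2 : Complex.abs z ^ (-κ) ≤ 1 :=
      Real.rpow_le_one_of_one_le_of_nonpos hz1 (by linarith)
    nlinarith [Complex.abs.nonneg (f z), Real.rpow_nonneg (Complex.abs.nonneg z) (-κ)]
  calc Complex.abs (f z - f b) * (Complex.abs (z - b))⁻¹
      ≤ (M + Complex.abs (f b)) * (Complex.abs z / 2)⁻¹ :=
        mul_le_mul h1 (inv_anti₀ (by positivity) hzb') (by positivity)
          (by linarith [Complex.abs.nonneg (f b)])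
    _ = 2 * (M + Complex.abs (f b)) * (Complex.abs z)⁻¹ := by rw [inv_div]; ring
    _ = 2 * (M + Complex.abs (f b)) * Complex.abs z ^ (-(1:ℝ)) := by
        rw [Real.rpow_neg_one]



/-- integrability on a vertical line from decay `κ > 1` -/
lemma integrable_line {α β : ℝ} {f : ℂ → ℂ} {c : ℝ}
    (hcont : Continuous fun t => f (line c t)) {κ : ℝ} (hκ : 1 < κ)
    (hdec : DecayOn (S α β) f κ) (h1 : α < c) (h2 : c < β) :
    Integrable (fun t => f (line c t)) := by
  obtain ⟨M, R, hM, hR, hbd⟩ := hdec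
  have hR0 : (0:ℝ) < R := lt_of_lt_of_le one_pos hR
  -- bound for |t| ≥ R
  have key : ∀ t : ℝ, R ≤ |t| → ‖f (line c t)‖ ≤ M * |t| ^ (-κ) := by
    intro t ht
    have habs : R ≤ Complex.abs (line c t) := le_trans ht (abs_le_abs_line c t)
    have h3 := hbd _ (line_mem_S h1 h2 t) habs
    refine le_trans h3 ?_
    have : Complex.abs (line c t) ^ (-κ) ≤ |t| ^ (-κ) :=
      Real.rpow_le_rpow_of_nonpos (lt_of_lt_of_le hR0 ht) (abs_le_abs_line c t)
        (by linarith)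
    exact mul_le_mul_of_nonneg_left this hM
  have hmeas : AEStronglyMeasurable (fun t => f (line c t)) volume :=
    hcont.aestronglyMeasurable
  rw [← integrableOn_univ, ← Set.Iic_union_Ioi (a := (-R)), integrableOn_union]
  constructor
  · -- Iic (-R)
    rw [← (Measure.measurePreserving_neg (volume : Measure ℝ)).integrableOn_comp_preimage
        (Homeomorph.neg ℝ).measurableEmbedding]
    simp only [Function.comp_def, neg_preimage, neg_Iic, neg_neg]
    rw [integrableOn_Ici_iff_integrableOn_Ioi]
    refine Integrable.mono'
      ((integrableOn_Ioi_rpow_of_lt (show -κ < -1 by linarith) hR0).const_mul M)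
      ((hcont.comp continuous_neg).aestronglyMeasurable).restrict ?_
    filter_upwards [ae_restrict_mem measurableSet_Ioi] with t ht
    have ht0 : (0:ℝ) < t := lt_trans hR0 ht
    have ht' : R ≤ |(-t)| := by rw [abs_neg, abs_of_pos ht0]; exact le_of_lt ht
    refine le_trans (key (-t) ht') ?_
    rw [abs_neg, abs_of_pos ht0]
  · -- Icc ∪ Ioi split
    have hsplit : Ioi (-R) = Ioc (-R) R ∪ Ioi R := by
      rw [Set.Ioc_union_Ioi_eq_Ioi]; linarith
    rw [hsplit, integrableOn_union]
    constructor
    · exact (hcont.integrableOn_Icc (a := -R) (b := R)).mono_set Ioc_subset_Icc_self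
    · refine Integrable.mono' ((integrableOn_Ioi_rpow_of_lt (show -κ < -1 by linarith) hR0).const_mul M)
        (hmeas.restrict) ?_
      filter_upwards [ae_restrict_mem measurableSet_Ioi] with t ht
      have ht' : R ≤ |t| := by
        rw [abs_of_pos (lt_trans hR0 ht)]; exact le_of_lt ht
      refine (key t ht').trans ?_
      rw [abs_of_pos (lt_trans hR0 ht)]

/-- `IntegrableOn (exp (ρ x)) (Iic X)` for `ρ > 0` -/
lemma integrableOn_exp_mul_Iic {ρ : ℝ} (hρ : 0 < ρ) (X : ℝ) :
    IntegrableOn (fun x => Real.exp (ρ * x)) (Iic X) := by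
  rw [← (Measure.measurePreserving_neg (volume : Measure ℝ)).integrableOn_comp_preimage
      (Homeomorph.neg ℝ).measurableEmbedding]
  simp only [Function.comp_def, neg_preimage, neg_Iic]
  have : IntegrableOn (fun x : ℝ => Real.exp (-ρ * x)) (Ici (-X)) := by
    rw [integrableOn_Ici_iff_integrableOn_Ioi]
    exact exp_neg_integrableOn_Ioi _ hρ
  refine this.congr_fun (fun x _ => by ring_nf) measurableSet_Ici

/-- complex exponential integral over `Ioi 0` -/
lemma integrableOn_cexp_Ioi {b : ℂ} (hb : 0 < b.re) :
    IntegrableOn (fun x : ℝ => Complex.exp (-(b * x))) (Ioi 0) := by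
  refine Integrable.mono' (exp_neg_integrableOn_Ioi 0 hb)
    (Continuous.aestronglyMeasurable (by continuity)).restrict ?_
  filter_upwards with x
  rw [Complex.norm_eq_abs, Complex.abs_exp]
  simp [mul_comm]

lemma integral_cexp_Ioi {b : ℂ} (hb : 0 < b.re) :
    ∫ x : ℝ in Ioi 0, Complex.exp (-(b * x)) = b⁻¹ := by
  have hb0 : b ≠ 0 := fun h => by simp [h] at hb
  have lim1 := intervalIntegral_tendsto_integral_Ioi 0 (integrableOn_cexp_Ioi hb)
    (tendsto_id (α := ℝ) (x := atTop))
  have heq : ∀ T : ℝ, ∫ x : ℝ in (0:ℝ)..T, Complex.exp (-(b * x))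
      = (Complex.exp (-b * T) - 1) / (-b) := by
    intro T
    have := integral_exp_mul_complex (a := 0) (b := T) (c := -b) (by simpa using hb0)
    simpa [neg_mul] using this
  have lim2 : Tendsto (fun T : ℝ => ∫ x : ℝ in (0:ℝ)..T, Complex.exp (-(b * x)))
      atTop (𝓝 ((0 - 1)/(-b))) := by
    simp_rw [heq]
    refine Tendsto.div_const ?_ _
    refine Tendsto.sub_const ?_ _
    -- cexp(-b T) → 0
    rw [tendsto_zero_iff_norm_tendsto_zero]
    simp_rw [Complex.norm_eq_abs, Complex.abs_exp]
    have hre : ∀ T : ℝ, ((-b) * (T:ℂ)).re = -(b.re * T) := by intro T; simp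
    simp_rw [hre]
    have h1 : Tendsto (fun T : ℝ => b.re * T) atTop atTop :=
      Tendsto.const_mul_atTop hb tendsto_id
    exact Real.tendsto_exp_atBot.comp (tendsto_neg_atTop_atBot.comp h1)
  have := tendsto_nhds_unique lim1 lim2
  rw [this]
  field_simp
  ring



lemma tendsto_log_ratio (p q : ℝ) (hp : p ≠ 0) :
    Tendsto (fun T : ℝ => Real.log (p^2+(T+q)^2) - Real.log (p^2+(-T+q)^2)) atTop (𝓝 0) := by
  have hp2 : 0 < p^2 := by positivity
  have hA : ∀ T : ℝ, 0 < p^2+(T+q)^2 := fun T => by positivity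
  have hB : ∀ T : ℝ, 0 < p^2+(-T+q)^2 := fun T => by positivity
  have heq : ∀ T : ℝ, Real.log (p^2+(T+q)^2) - Real.log (p^2+(-T+q)^2)
      = Real.log ((p^2+(T+q)^2)/(p^2+(-T+q)^2)) :=
    fun T => (Real.log_div (hA T).ne' (hB T).ne').symm
  simp_rw [heq]
  have hratio : Tendsto (fun T : ℝ => (p^2+(T+q)^2)/(p^2+(-T+q)^2)) atTop (𝓝 1) := by
    have heq2 : ∀ T : ℝ, (p^2+(T+q)^2)/(p^2+(-T+q)^2) = 1 + 4*q*T/(p^2+(-T+q)^2) := by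
      intro T
      field_simp
      ring
    simp_rw [heq2]
    have h0 : Tendsto (fun T : ℝ => 4*q*T/(p^2+(-T+q)^2)) atTop (𝓝 0) := by
      have hbnd : ∀ᶠ T : ℝ in atTop,
          ‖4*q*T/(p^2+(-T+q)^2)‖ ≤ (16 * |q| + 1) * T⁻¹ := by
        filter_upwards [eventually_ge_atTop (2 * |q| + 1)] with T hT
        have hT0 : 0 < T := lt_of_lt_of_le (by positivity) hT
        have h1 : T/2 ≤ T - q := by
          have h1a : |q| ≤ T/2 := by linarith
          have h1b := le_abs_self q
          linarith
        have h2 : (T/2)^2 ≤ (-T+q)^2 := by nlinarith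
        have h3 : (T/2)^2 ≤ p^2+(-T+q)^2 := by nlinarith
        have h4 : |4*q*T| = 4 * |q| * T := by
          rw [abs_mul, abs_mul]
          simp [abs_of_pos hT0]
        rw [Real.norm_eq_abs, abs_div, abs_of_pos (hB T), div_le_iff₀ (hB T), h4]
        have h5 : (16 * |q| + 1) * T⁻¹ * (T/2)^2 ≤ (16 * |q| + 1) * T⁻¹ * (p^2+(-T+q)^2) := by
          have hpos : (0:ℝ) < (16 * |q| + 1) * T⁻¹ := by positivity
          nlinarith
        have h6 : (16 * |q| + 1) * T⁻¹ * (T/2)^2 = (16 * |q| + 1) * T / 4 := by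
          field_simp
          ring
        nlinarith [abs_nonneg q]
      have hg0 : Tendsto (fun T : ℝ => (16 * |q| + 1) * T⁻¹) atTop (𝓝 0) := by
        simpa using (tendsto_inv_atTop_zero (𝕜 := ℝ)).const_mul (16 * |q| + 1)
      exact squeeze_zero_norm' hbnd hg0
    have h1 := h0.const_add (1:ℝ)
    rw [add_zero] at h1
    exact h1
  have hcont := (Real.continuousAt_log (one_ne_zero)).tendsto
  have hfin := hcont.comp hratio
  simpa [Function.comp_def] using hfin

lemma tendsto_I_inv_line {u : ℂ} {c : ℝ} (hc : c ≠ u.re) :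
    Tendsto (fun T : ℝ => Complex.I * ∫ t in (-T)..T, (line c t - u)⁻¹) atTop
      (𝓝 (if u.re < c then (Real.pi:ℂ)*Complex.I else -((Real.pi:ℂ)*Complex.I))) := by
  set p := c - u.re with hpdef
  set q := -u.im with hqdef
  have hp : p ≠ 0 := sub_ne_zero.mpr (fun h => hc h)
  have hD : ∀ s : ℝ, (0:ℝ) < p^2 + s^2 := fun s => by positivity
  have hline : ∀ t : ℝ, line c t - u = (p:ℂ) + (t+q : ℝ)*Complex.I := by
    intro t
    apply Complex.ext <;> simp [line, hpdef, hqdef] <;> ring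
  have hne : ∀ t : ℝ, line c t - u ≠ 0 := by
    intro t h
    rw [hline t] at h
    have := congrArg Complex.re h
    simp at this
    exact hp this
  -- the antiderivative
  set φ : ℝ → ℂ := fun t =>
    (↑(Real.log (p^2+(t+q)^2) / 2) + ↑(Real.arctan ((t+q)/p)) * Complex.I) with hφdef
  have hderiv : ∀ t : ℝ, HasDerivAt φ (Complex.I * (line c t - u)⁻¹) t := by
    intro t
    have hA : HasDerivAt (fun t : ℝ => p^2+(t+q)^2) (2*(t+q)) t := by
      have h1 : HasDerivAt (fun t : ℝ => t+q) 1 t := (hasDerivAt_id t).add_const q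
      simpa using (h1.pow 2).const_add (p^2)
    have hr1 : HasDerivAt (fun t : ℝ => Real.log (p^2+(t+q)^2) / 2)
        ((t+q)/(p^2+(t+q)^2)) t := by
      have := (hA.log (hD (t+q)).ne').div_const 2
      refine this.congr_deriv ?_
      ring
    have hr2 : HasDerivAt (fun t : ℝ => Real.arctan ((t+q)/p))
        (p/(p^2+(t+q)^2)) t := by
      have h1 : HasDerivAt (fun t : ℝ => (t+q)/p) (1/p) t :=
        ((hasDerivAt_id t).add_const q).div_const p
      have := h1.arctan
      convert this using 1
      field_simp
    have hc1 : HasDerivAt (fun t : ℝ => (↑(Real.log (p^2+(t+q)^2) / 2) : ℂ))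
        (↑((t+q)/(p^2+(t+q)^2)) : ℂ) t := hr1.ofReal_comp
    have hc2 : HasDerivAt (fun t : ℝ => (↑(Real.arctan ((t+q)/p)) : ℂ) * Complex.I)
        ((↑(p/(p^2+(t+q)^2)) : ℂ) * Complex.I) t := hr2.ofReal_comp.mul_const _
    have hsum := hc1.add hc2
    refine hsum.congr_deriv (Eq.symm ?_)
    -- I * (line c t - u)⁻¹ = (t+q)/D + (p/D) * I
    rw [hline t]
    have hzne : ((p:ℂ) + (t+q : ℝ)*Complex.I) ≠ 0 := by
      intro h
      have h' := congrArg Complex.re h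
      simp at h'
      exact hp h'
    have hDne : ((p:ℝ)^2+(t+q)^2 : ℝ) ≠ 0 := (hD (t+q)).ne'
    have key : ((↑((t+q)/(p^2+(t+q)^2)) : ℂ) + (↑(p/(p^2+(t+q)^2)) : ℂ) * Complex.I)
        * ((p:ℂ) + (t+q : ℝ)*Complex.I) = Complex.I := by
      apply Complex.ext <;>
        simp only [Complex.mul_re, Complex.mul_im, Complex.add_re, Complex.add_im,
          Complex.ofReal_re, Complex.ofReal_im, Complex.I_re, Complex.I_im] <;>
        field_simp <;> ring
    rw [eq_comm, eq_mul_inv_iff_mul_eq₀ hzne]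
    exact key
  have hcont : Continuous fun t => Complex.I * (line c t - u)⁻¹ := by
    refine continuous_const.mul (Continuous.inv₀ ?_ hne)
    unfold line
    continuity
  have hval : ∀ T : ℝ, Complex.I * ∫ t in (-T)..T, (line c t - u)⁻¹ = φ T - φ (-T) := by
    intro T
    rw [← intervalIntegral.integral_const_mul]
    exact intervalIntegral.integral_eq_sub_of_hasDerivAt (fun t _ => hderiv t)
      (hcont.intervalIntegrable _ _)
  simp_rw [hval]
  -- now the limit of φ T - φ (-T)
  have hlog : Tendsto (fun T : ℝ =>
      Real.log (p^2+(T+q)^2)/2 - Real.log (p^2+(-T+q)^2)/2) atTop (𝓝 0) := by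
    have := (tendsto_log_ratio p q hp).div_const 2
    simp only [zero_div] at this
    convert this using 2
    ring
  have harctanTop : Tendsto (fun T : ℝ => Real.arctan ((T+q)/p)) atTop
      (𝓝 (if 0 < p then Real.pi/2 else -(Real.pi/2))) := by
    rcases lt_or_gt_of_ne hp with hneg | hpos
    · simp only [if_neg (not_lt.mpr hneg.le)]
      refine (tendsto_nhds_of_tendsto_nhdsWithin Real.tendsto_arctan_atBot).comp ?_
      have h1 : Tendsto (fun T : ℝ => (T+q) * p⁻¹) atTop atBot :=
        (tendsto_atTop_add_const_right _ q tendsto_id).atTop_mul_const_of_neg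
          (inv_neg''.mpr hneg)
      simpa [div_eq_mul_inv] using h1
    · simp only [if_pos hpos]
      refine (tendsto_nhds_of_tendsto_nhdsWithin Real.tendsto_arctan_atTop).comp ?_
      exact (tendsto_atTop_add_const_right _ q tendsto_id).atTop_div_const hpos
  have harctanBot : Tendsto (fun T : ℝ => Real.arctan ((-T+q)/p)) atTop
      (𝓝 (if 0 < p then -(Real.pi/2) else Real.pi/2)) := by
    rcases lt_or_gt_of_ne hp with hneg | hpos
    · simp only [if_neg (not_lt.mpr hneg.le)]
      refine (tendsto_nhds_of_tendsto_nhdsWithin Real.tendsto_arctan_atTop).comp ?_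
      have h1 : Tendsto (fun T : ℝ => (-T+q) * p⁻¹) atTop atTop :=
        (tendsto_atBot_add_const_right _ q tendsto_neg_atTop_atBot).atBot_mul_const_of_neg
          (inv_neg''.mpr hneg)
      simpa [div_eq_mul_inv] using h1
    · simp only [if_pos hpos]
      refine (tendsto_nhds_of_tendsto_nhdsWithin Real.tendsto_arctan_atBot).comp ?_
      exact (tendsto_atBot_add_const_right _ q tendsto_neg_atTop_atBot).atBot_div_const hpos
  have harctan : Tendsto (fun T : ℝ => Real.arctan ((T+q)/p) - Real.arctan ((-T+q)/p))
      atTop (𝓝 (if 0 < p then Real.pi else -Real.pi)) := by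
    have := harctanTop.sub harctanBot
    rcases lt_or_ge 0 p with h | h
    · simpa [if_pos h] using this
    · have h' : ¬ (0 < p) := not_lt.mpr h
      simp only [if_neg h'] at this ⊢
      convert this using 1
      ring
  have hfinal : Tendsto (fun T : ℝ => φ T - φ (-T)) atTop
      (𝓝 (↑(if 0 < p then Real.pi else -Real.pi) * Complex.I)) := by
    have hre := (Complex.continuous_ofReal.tendsto (0:ℝ)).comp hlog
    have him := ((Complex.continuous_ofReal.tendsto _).comp harctan).mul_const Complex.I
    have hsum := hre.add him
    simp only [Complex.ofReal_zero, zero_add] at hsum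
    refine hsum.congr (fun T => ?_)
    simp only [Function.comp_apply, hφdef, Complex.ofReal_sub]
    ring
  have hiff : u.re < c ↔ 0 < p := by rw [hpdef]; constructor <;> intro h <;> linarith
  rcases lt_or_ge u.re c with h | h
  · rw [if_pos h]
    have := hiff.mp h
    simpa [if_pos this] using hfinal
  · rw [if_neg (not_lt.mpr h)]
    have h2 : ¬ (0 < p) := fun hh => absurd (hiff.mpr hh) (not_lt.mpr h)
    have := hfinal
    rw [if_neg h2] at this
    simpa using this


end Biorth

namespace Biorth

lemma lineIntegral_eq (c : ℝ) (f : ℂ → ℂ) :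
    lineIntegral c f = Complex.I * ∫ t : ℝ, f (line c t) := rfl

lemma DecayOn.eventually_small {α β : ℝ} {f : ℂ → ℂ} {κ : ℝ}
    (hdec : DecayOn (S α β) f κ) (hκ : 0 < κ) {η : ℝ} (hη : 0 < η) :
    ∃ T₀ : ℝ, 1 ≤ T₀ ∧ ∀ z ∈ S α β, T₀ ≤ Complex.abs z → Complex.abs (f z) ≤ η := by
  obtain ⟨M, R, hM, hR, hbd⟩ := hdec
  refine ⟨max R ((M/η + 1) ^ (κ⁻¹)), le_trans hR (le_max_left _ _), fun z hz hT => ?_⟩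
  have hMη : (0:ℝ) < M/η + 1 := by positivity
  have hbase : (0:ℝ) < (M/η + 1) ^ (κ⁻¹) := Real.rpow_pos_of_pos hMη _
  have hz0 : (0:ℝ) < Complex.abs z := lt_of_lt_of_le hbase (le_trans (le_max_right _ _) hT)
  refine (hbd z hz (le_trans (le_max_left _ _) hT)).trans ?_
  have h1 : Complex.abs z ^ (-κ) ≤ ((M/η + 1) ^ (κ⁻¹)) ^ (-κ) :=
    Real.rpow_le_rpow_of_nonpos hbase (le_trans (le_max_right _ _) hT) (by linarith)
  have h2 : ((M/η + 1) ^ (κ⁻¹)) ^ (-κ) = (M/η + 1)⁻¹ := by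
    rw [← Real.rpow_mul hMη.le]
    have hx : κ⁻¹ * (-κ) = -1 := by field_simp
    rw [hx, Real.rpow_neg_one]
  have h3 : M * Complex.abs z ^ (-κ) ≤ M * (M/η + 1)⁻¹ := by
    rw [← h2]
    exact mul_le_mul_of_nonneg_left h1 hM
  refine h3.trans ?_
  rw [mul_inv_le_iff₀ hMη]
  calc M ≤ M + η := by linarith
    _ = η * (M/η + 1) := by field_simp

lemma lineIntegral_shift {α β : ℝ} {f : ℂ → ℂ} (hd : DifferentiableOn ℂ f (S α β))
    {κ : ℝ} (hκ : 0 < κ) (hdec : DecayOn (S α β) f κ)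
    {c₁ c₂ : ℝ} (h1 : α < c₁) (h12 : c₁ ≤ c₂) (h2 : c₂ < β)
    (hi1 : Integrable fun t => f (line c₁ t)) (hi2 : Integrable fun t => f (line c₂ t)) :
    lineIntegral c₁ f = lineIntegral c₂ f := by
  have hc₂α : α < c₂ := lt_of_lt_of_le h1 h12
  have hc₁β : c₁ < β := lt_of_le_of_lt h12 h2
  have hrect : ∀ T : ℝ, 0 ≤ T →
      ((Complex.I • ∫ t in (-T)..T, f (line c₂ t)) - Complex.I • ∫ t in (-T)..T, f (line c₁ t))
      = (∫ x in c₁..c₂, f (↑x + ↑T * Complex.I))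
        - ∫ x in c₁..c₂, f (↑x + ↑(-T : ℝ) * Complex.I) := by
    intro T hT
    have hcont : ContinuousOn f (uIcc c₁ c₂ ×ℂ uIcc (-T) T) := by
      refine hd.continuousOn.mono (fun z hz => ?_)
      rw [Complex.mem_reProdIm, uIcc_of_le h12] at hz
      exact ⟨lt_of_lt_of_le h1 hz.1.1, lt_of_le_of_lt hz.1.2 h2⟩
    have hdiff : DifferentiableOn ℂ f
        (Ioo (min c₁ c₂) (max c₁ c₂) ×ℂ Ioo (min (-T) T) (max (-T) T)) := by
      refine hd.mono (fun z hz => ?_)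
      rw [Complex.mem_reProdIm] at hz
      exact ⟨lt_of_le_of_lt (le_min h1.le hc₂α.le) hz.1.1,
        lt_of_lt_of_le hz.1.2 (max_le hc₁β.le h2.le)⟩
    have H : (∫ x in c₁..c₂, f (↑x + ↑(-T : ℝ) * Complex.I))
        - (∫ x in c₁..c₂, f (↑x + ↑T * Complex.I))
        + Complex.I • (∫ y in (-T)..T, f (↑c₂ + ↑y * Complex.I))
        - Complex.I • (∫ y in (-T)..T, f (↑c₁ + ↑y * Complex.I)) = 0 :=
      Complex.integral_boundary_rect_eq_zero_of_continuousOn_of_differentiableOn f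
        (⟨c₁, -T⟩ : ℂ) (⟨c₂, T⟩ : ℂ) hcont hdiff
    have H' : (∫ x in c₁..c₂, f (↑x + ↑(-T : ℝ) * Complex.I))
        - (∫ x in c₁..c₂, f (↑x + ↑T * Complex.I))
        + Complex.I • (∫ y in (-T)..T, f (line c₂ y))
        - Complex.I • (∫ y in (-T)..T, f (line c₁ y)) = 0 := H
    rw [smul_eq_mul, smul_eq_mul] at H' ⊢
    linear_combination H'
  have t1 : Tendsto (fun T : ℝ => Complex.I • ∫ t in (-T)..T, f (line c₂ t)) atTop
      (𝓝 (lineIntegral c₂ f)) := by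
    rw [lineIntegral_eq]
    have := (intervalIntegral_tendsto_integral hi2 tendsto_neg_atTop_atBot tendsto_id).const_smul
      (Complex.I)
    simpa [smul_eq_mul] using this
  have t2 : Tendsto (fun T : ℝ => Complex.I • ∫ t in (-T)..T, f (line c₁ t)) atTop
      (𝓝 (lineIntegral c₁ f)) := by
    rw [lineIntegral_eq]
    have := (intervalIntegral_tendsto_integral hi1 tendsto_neg_atTop_atBot tendsto_id).const_smul
      (Complex.I)
    simpa [smul_eq_mul] using this
  have tsub := t1.sub t2
  have t0 : Tendsto (fun T : ℝ =>
      (Complex.I • ∫ t in (-T)..T, f (line c₂ t)) - Complex.I • ∫ t in (-T)..T, f (line c₁ t))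
      atTop (𝓝 0) := by
    rw [NormedAddCommGroup.tendsto_nhds_zero]
    intro ε hε
    have hd12 : (0:ℝ) ≤ c₂ - c₁ := by linarith
    set η := ε / (2*(c₂ - c₁) + 2) with hηdef
    have hηpos : 0 < η := by positivity
    obtain ⟨T₀, hT₀1, hsmall⟩ := hdec.eventually_small hκ hηpos
    filter_upwards [eventually_ge_atTop (max T₀ 0)] with T hT
    have hT0 : (0:ℝ) ≤ T := le_trans (le_max_right _ _) hT
    have hTT₀ : T₀ ≤ T := le_trans (le_max_left _ _) hT
    rw [hrect T hT0]
    have hb : ∀ s : ℝ, |s| = T → ‖∫ x in c₁..c₂, f (↑x + ↑s * Complex.I)‖ ≤ η * |c₂ - c₁| := by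
      intro s hs
      refine intervalIntegral.norm_integral_le_of_norm_le_const (fun x hx => ?_)
      rw [uIoc_of_le h12] at hx
      have hmem : line x s ∈ S α β := line_mem_S (lt_of_lt_of_le h1 hx.1.le)
        (lt_of_le_of_lt hx.2 h2) s
      have habs : T₀ ≤ Complex.abs (line x s) := by
        refine le_trans ?_ (abs_le_abs_line x s)
        rw [hs]; exact hTT₀
      have := hsmall _ hmem habs
      rw [Complex.norm_eq_abs]
      exact this
    have hbT := hb T (_root_.abs_of_nonneg hT0)
    have hbT' := hb (-T) (by rw [abs_neg, _root_.abs_of_nonneg hT0])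
    calc ‖(∫ x in c₁..c₂, f (↑x + ↑T * Complex.I))
          - ∫ x in c₁..c₂, f (↑x + ↑(-T:ℝ) * Complex.I)‖
        ≤ ‖∫ x in c₁..c₂, f (↑x + ↑T * Complex.I)‖
          + ‖∫ x in c₁..c₂, f (↑x + ↑(-T:ℝ) * Complex.I)‖ := norm_sub_le _ _
      _ ≤ η * |c₂ - c₁| + η * |c₂ - c₁| := add_le_add hbT hbT'
      _ < ε := by
          rw [_root_.abs_of_nonneg hd12]
          have hkey : η * (2*(c₂-c₁) + 2) = ε := by
            rw [hηdef]; field_simp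
          nlinarith [hηpos]
  have hfin := tendsto_nhds_unique tsub t0
  exact (sub_eq_zero.mp hfin).symm

end Biorth

namespace Biorth

lemma rect_identity {α β : ℝ} {f : ℂ → ℂ} (hd : DifferentiableOn ℂ f (S α β))
    {c₁ c₂ : ℝ} (h1 : α < c₁) (h12 : c₁ ≤ c₂) (h2 : c₂ < β) (T : ℝ) :
    ((Complex.I • ∫ t in (-T)..T, f (line c₂ t)) - Complex.I • ∫ t in (-T)..T, f (line c₁ t))
      = (∫ x in c₁..c₂, f (↑x + ↑T * Complex.I))
        - ∫ x in c₁..c₂, f (↑x + ↑(-T : ℝ) * Complex.I) := by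
  have hc₂α : α < c₂ := lt_of_lt_of_le h1 h12
  have hc₁β : c₁ < β := lt_of_le_of_lt h12 h2
  have hcont : ContinuousOn f (uIcc c₁ c₂ ×ℂ uIcc (-T) T) := by
    refine hd.continuousOn.mono (fun z hz => ?_)
    rw [Complex.mem_reProdIm, uIcc_of_le h12] at hz
    exact ⟨lt_of_lt_of_le h1 hz.1.1, lt_of_le_of_lt hz.1.2 h2⟩
  have hdiff : DifferentiableOn ℂ f
      (Ioo (min c₁ c₂) (max c₁ c₂) ×ℂ Ioo (min (-T) T) (max (-T) T)) := by
    refine hd.mono (fun z hz => ?_)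
    rw [Complex.mem_reProdIm] at hz
    exact ⟨lt_of_le_of_lt (le_min h1.le hc₂α.le) hz.1.1,
      lt_of_lt_of_le hz.1.2 (max_le hc₁β.le h2.le)⟩
  have H : (∫ x in c₁..c₂, f (↑x + ↑(-T : ℝ) * Complex.I))
      - (∫ x in c₁..c₂, f (↑x + ↑T * Complex.I))
      + Complex.I • (∫ y in (-T)..T, f (↑c₂ + ↑y * Complex.I))
      - Complex.I • (∫ y in (-T)..T, f (↑c₁ + ↑y * Complex.I)) = 0 :=
    Complex.integral_boundary_rect_eq_zero_of_continuousOn_of_differentiableOn f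
      (⟨c₁, -T⟩ : ℂ) (⟨c₂, T⟩ : ℂ) hcont hdiff
  have H' : (∫ x in c₁..c₂, f (↑x + ↑(-T : ℝ) * Complex.I))
      - (∫ x in c₁..c₂, f (↑x + ↑T * Complex.I))
      + Complex.I • (∫ y in (-T)..T, f (line c₂ y))
      - Complex.I • (∫ y in (-T)..T, f (line c₁ y)) = 0 := H
  rw [smul_eq_mul, smul_eq_mul] at H' ⊢
  linear_combination H'

lemma tendsto_horizontals {α β : ℝ} {f : ℂ → ℂ} {κ : ℝ}
    (hdec : DecayOn (S α β) f κ) (hκ : 0 < κ)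
    {c₁ c₂ : ℝ} (h1 : α < c₁) (h12 : c₁ ≤ c₂) (h2 : c₂ < β) :
    Tendsto (fun T : ℝ => (∫ x in c₁..c₂, f (↑x + ↑T * Complex.I))
      - ∫ x in c₁..c₂, f (↑x + ↑(-T : ℝ) * Complex.I)) atTop (𝓝 0) := by
  rw [NormedAddCommGroup.tendsto_nhds_zero]
  intro ε hε
  have hd12 : (0:ℝ) ≤ c₂ - c₁ := by linarith
  set η := ε / (2*(c₂ - c₁) + 2) with hηdef
  have hηpos : 0 < η := by positivity
  obtain ⟨T₀, hT₀1, hsmall⟩ := hdec.eventually_small hκ hηpos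
  filter_upwards [eventually_ge_atTop (max T₀ 0)] with T hT
  have hT0 : (0:ℝ) ≤ T := le_trans (le_max_right _ _) hT
  have hTT₀ : T₀ ≤ T := le_trans (le_max_left _ _) hT
  have hb : ∀ s : ℝ, |s| = T → ‖∫ x in c₁..c₂, f (↑x + ↑s * Complex.I)‖ ≤ η * |c₂ - c₁| := by
    intro s hs
    refine intervalIntegral.norm_integral_le_of_norm_le_const (fun x hx => ?_)
    rw [uIoc_of_le h12] at hx
    have hmem : line x s ∈ S α β := line_mem_S (lt_of_lt_of_le h1 hx.1.le)
      (lt_of_le_of_lt hx.2 h2) s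
    have habs : T₀ ≤ Complex.abs (line x s) := by
      refine le_trans ?_ (abs_le_abs_line x s)
      rw [hs]; exact hTT₀
    have := hsmall _ hmem habs
    rw [Complex.norm_eq_abs]
    exact this
  have hbT := hb T (_root_.abs_of_nonneg hT0)
  have hbT' := hb (-T) (by rw [abs_neg, _root_.abs_of_nonneg hT0])
  calc ‖(∫ x in c₁..c₂, f (↑x + ↑T * Complex.I))
        - ∫ x in c₁..c₂, f (↑x + ↑(-T:ℝ) * Complex.I)‖
      ≤ ‖∫ x in c₁..c₂, f (↑x + ↑T * Complex.I)‖
        + ‖∫ x in c₁..c₂, f (↑x + ↑(-T:ℝ) * Complex.I)‖ := norm_sub_le _ _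
    _ ≤ η * |c₂ - c₁| + η * |c₂ - c₁| := add_le_add hbT hbT'
    _ < ε := by
        rw [_root_.abs_of_nonneg hd12]
        have hkey : η * (2*(c₂-c₁) + 2) = ε := by
          rw [hηdef]; field_simp
        nlinarith [hηpos]

lemma line_ne_of_re_ne {c : ℝ} {u : ℂ} (hc : c ≠ u.re) (t : ℝ) : line c t ≠ u := by
  intro h
  apply hc
  rw [← h, line_re]

/-- Cauchy integral formula between two vertical lines. -/
lemma lineIntegral_cif {α β : ℝ} {g : ℂ → ℂ} (hg : DifferentiableOn ℂ g (S α β))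
    {κ : ℝ} (hκ : 1 < κ) (hdec : DecayOn (S α β) g κ) {u : ℂ} (hu : u ∈ S α β)
    {cm cp : ℝ} (h1 : α < cm) (h2 : cm < u.re) (h3 : u.re < cp) (h4 : cp < β) :
    lineIntegral cp (fun v => g v * (v - u)⁻¹) - lineIntegral cm (fun v => g v * (v - u)⁻¹)
      = 2 * Real.pi * Complex.I * g u := by
  have hSu : S α β ∈ 𝓝 u := (isOpen_S α β).mem_nhds hu
  have hds : DifferentiableOn ℂ (dslope g u) (S α β) :=
    (Complex.differentiableOn_dslope hSu).mpr hg
  have hdecds : DecayOn (S α β) (dslope g u) 1 := hdec.dslope_gen (by linarith) u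
  have hcmu : cm ≠ u.re := ne_of_lt h2
  have hcpu : cp ≠ u.re := ne_of_gt h3
  have hcmβ : cm < β := by linarith [hu.2]
  have hcpα : α < cp := by linarith [hu.1]
  -- continuity and integrability on the two lines
  have hcontline : ∀ c : ℝ, α < c → c < β → c ≠ u.re →
      Continuous (fun t => g (line c t) * (line c t - u)⁻¹) := by
    intro c hcα hcβ hcu
    refine (continuous_comp_line hg.continuousOn hcα hcβ).mul (Continuous.inv₀ ?_ ?_)
    · exact (continuous_line c).sub continuous_const
    · exact fun t => sub_ne_zero.mpr (line_ne_of_re_ne hcu t)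
  have hintline : ∀ c : ℝ, α < c → c < β → c ≠ u.re →
      Integrable (fun t => g (line c t) * (line c t - u)⁻¹) := by
    intro c hcα hcβ hcu
    exact integrable_line (f := fun v => g v * (v - u)⁻¹) (hcontline c hcα hcβ hcu)
      (show (1:ℝ) < κ + 1 by linarith) (hdec.div_sub u) hcα hcβ
  have himp := hintline cm h1 hcmβ hcmu
  have himq := hintline cp hcpα h4 hcpu
  -- pointwise splitting on lines off the vertical through u
  have hsplit : ∀ (c : ℝ), α < c → c < β → c ≠ u.re → ∀ T : ℝ,
      (Complex.I • ∫ t in (-T)..T, g (line c t) * (line c t - u)⁻¹)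
        = (Complex.I • ∫ t in (-T)..T, dslope g u (line c t))
          + g u * (Complex.I * ∫ t in (-T)..T, (line c t - u)⁻¹) := by
    intro c hcα hcβ hcu T
    have hptwise : ∀ t : ℝ, g (line c t) * (line c t - u)⁻¹
        = dslope g u (line c t) + g u * (line c t - u)⁻¹ := by
      intro t
      have hne : line c t ≠ u := line_ne_of_re_ne hcu t
      rw [dslope_of_ne g hne, slope_def_field]
      have hsub : line c t - u ≠ 0 := sub_ne_zero.mpr hne
      field_simp
      ring
    have hcds : Continuous fun t => dslope g u (line c t) := by
      rw [continuous_iff_continuousAt]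
      intro t
      refine ContinuousAt.comp ?_ (continuous_line c).continuousAt
      exact (continuousAt_dslope_of_ne (line_ne_of_re_ne hcu t)).mpr
        ((hg.differentiableAt
          ((isOpen_S α β).mem_nhds (line_mem_S hcα hcβ t))).continuousAt)
    have hcinv : Continuous fun t => (line c t - u)⁻¹ :=
      Continuous.inv₀ ((continuous_line c).sub continuous_const)
        (fun t => sub_ne_zero.mpr (line_ne_of_re_ne hcu t))
    have hci : IntervalIntegrable (fun t => dslope g u (line c t)) volume (-T) T :=
      hcds.intervalIntegrable _ _
    have hci2 : IntervalIntegrable (fun t => g u * (line c t - u)⁻¹) volume (-T) T :=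
      (continuous_const.mul hcinv).intervalIntegrable _ _
    simp_rw [hptwise]
    rw [intervalIntegral.integral_add hci hci2, intervalIntegral.integral_const_mul,
      smul_eq_mul, smul_eq_mul]
    ring
  have hle : cm ≤ cp := le_of_lt (lt_trans h2 h3)
  -- truncation limits
  have tp : Tendsto (fun T : ℝ => Complex.I • ∫ t in (-T)..T, g (line cp t) * (line cp t - u)⁻¹)
      atTop (𝓝 (lineIntegral cp (fun v => g v * (v - u)⁻¹))) := by
    rw [lineIntegral_eq]
    simpa [smul_eq_mul] using
      (intervalIntegral_tendsto_integral himq tendsto_neg_atTop_atBot tendsto_id).const_smul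
        Complex.I
  have tm : Tendsto (fun T : ℝ => Complex.I • ∫ t in (-T)..T, g (line cm t) * (line cm t - u)⁻¹)
      atTop (𝓝 (lineIntegral cm (fun v => g v * (v - u)⁻¹))) := by
    rw [lineIntegral_eq]
    simpa [smul_eq_mul] using
      (intervalIntegral_tendsto_integral himp tendsto_neg_atTop_atBot tendsto_id).const_smul
        Complex.I
  have tdiff := tp.sub tm
  -- the other representation of the truncated difference
  have t0 : Tendsto (fun T : ℝ =>
      (Complex.I • ∫ t in (-T)..T, dslope g u (line cp t))
        - Complex.I • ∫ t in (-T)..T, dslope g u (line cm t)) atTop (𝓝 0) :=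
    (tendsto_horizontals hdecds one_pos h1 hle h4).congr
      (fun T => (rect_identity hds h1 hle h4 T).symm)
  have tVp := tendsto_I_inv_line (u := u) (c := cp) hcpu
  rw [if_pos h3] at tVp
  have tVm := tendsto_I_inv_line (u := u) (c := cm) hcmu
  rw [if_neg (not_lt.mpr h2.le)] at tVm
  have tRHS : Tendsto (fun T : ℝ =>
      ((Complex.I • ∫ t in (-T)..T, dslope g u (line cp t))
        - Complex.I • ∫ t in (-T)..T, dslope g u (line cm t))
      + g u * ((Complex.I * ∫ t in (-T)..T, (line cp t - u)⁻¹)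
        - Complex.I * ∫ t in (-T)..T, (line cm t - u)⁻¹)) atTop
      (𝓝 (0 + g u * ((Real.pi : ℂ) * Complex.I - -((Real.pi : ℂ) * Complex.I)))) :=
    t0.add ((tVp.sub tVm).const_mul (g u))
  have tLHS : Tendsto (fun T : ℝ =>
      (Complex.I • ∫ t in (-T)..T, g (line cp t) * (line cp t - u)⁻¹)
        - Complex.I • ∫ t in (-T)..T, g (line cm t) * (line cm t - u)⁻¹) atTop
      (𝓝 (0 + g u * ((Real.pi : ℂ) * Complex.I - -((Real.pi : ℂ) * Complex.I)))) := by
    refine tRHS.congr (fun T => ?_)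
    rw [hsplit cp hcpα h4 hcpu T, hsplit cm h1 hcmβ hcmu T]
    ring
  have hfin := tendsto_nhds_unique tdiff tLHS
  rw [hfin]
  ring

end Biorth

namespace Biorth

lemma cpow_exp (x : ℝ) (v : ℂ) :
    ((Real.exp x : ℝ) : ℂ) ^ (-v) = Complex.exp (-(v * x)) := by
  rw [Complex.cpow_def_of_ne_zero (by exact_mod_cast (Real.exp_pos x).ne')]
  rw [← Complex.ofReal_log (Real.exp_pos x).le, Real.log_exp]
  congr 1
  ring

/-- rewrite `psiFun` at `y = exp x` via `dslope`. -/
lemma psiFun_eq {c : ℝ} {W : ℂ → ℂ} {b : ℂ} (hbc : b.re < c) (hb : W b = 0) (x : ℝ) :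
    psiFun c W b (Real.exp x)
      = (2 * (Real.pi : ℂ) * Complex.I * deriv W b)⁻¹ *
          lineIntegral c (fun v => dslope W b v * Complex.exp (-(v * x))) := by
  unfold psiFun
  congr 1
  rw [lineIntegral_eq, lineIntegral_eq]
  congr 1
  have : (fun t : ℝ => W (line c t) * ((Real.exp x : ℝ) : ℂ) ^ (-(line c t)) / (line c t - b))
      = fun t : ℝ => dslope W b (line c t) * Complex.exp (-(line c t * x)) := by
    funext t
    have hne : line c t ≠ b := line_ne_of_re_ne (ne_of_gt hbc) t
    rw [cpow_exp, dslope_of_ne W hne, slope_def_field, hb, sub_zero]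
    ring
  exact congrArg _ this

/-- order-free version of the shift -/
lemma lineIntegral_shift' {α β : ℝ} {f : ℂ → ℂ} (hd : DifferentiableOn ℂ f (S α β))
    {κ : ℝ} (hκ : 0 < κ) (hdec : DecayOn (S α β) f κ)
    {c₁ c₂ : ℝ} (h1 : α < c₁) (h1' : c₁ < β) (h2 : α < c₂) (h2' : c₂ < β)
    (hi1 : Integrable fun t => f (line c₁ t)) (hi2 : Integrable fun t => f (line c₂ t)) :
    lineIntegral c₁ f = lineIntegral c₂ f := by
  rcases le_total c₁ c₂ with h | h
  · exact lineIntegral_shift hd hκ hdec h1 h h2' hi1 hi2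
  · exact (lineIntegral_shift hd hκ hdec h2 h h1' hi2 hi1).symm

section PsiSetup

variable {α β : ℝ} {W : ℂ → ℂ} {b : ℂ} {ε : ℝ}

/-- the integrand of the shifted representation -/
lemma psi_integrand_diff (hWd : DifferentiableOn ℂ W (S α β)) (hbS : b ∈ S α β) (x : ℝ) :
    DifferentiableOn ℂ (fun v => dslope W b v * Complex.exp (-(v * x))) (S α β) := by
  refine DifferentiableOn.mul ?_ ?_
  · exact (Complex.differentiableOn_dslope ((isOpen_S α β).mem_nhds hbS)).mpr hWd
  · exact (Complex.differentiable_exp.comp ((differentiable_id.mul_const _).neg)).differentiableOn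

lemma psi_integrand_decay (hε : 0 < ε) (hdec : DecayOn (S α β) W ε) (hb : W b = 0) (x : ℝ) :
    DecayOn (S α β) (fun v => dslope W b v * Complex.exp (-(v * x))) (ε + 1) := by
  refine (hdec.dslope_zero hb).mul_bounded (K := Real.exp (|x| * (|α| + |β|)))
    (Real.exp_nonneg _) (fun z hz => ?_)
  rw [Complex.abs_exp]
  apply Real.exp_le_exp.mpr
  have h1 : (-(z * x)).re = -(z.re * x) := by simp
  rw [h1]
  have h2 : |z.re| ≤ |α| + |β| := by
    rw [abs_le]
    constructor
    · have := hz.1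
      have := neg_abs_le α
      have := abs_nonneg β
      linarith
    · have := hz.2
      have := le_abs_self β
      have := abs_nonneg α
      linarith
  calc -(z.re * x) ≤ |z.re * x| := neg_le_abs _
    _ = |x| * |z.re| := by rw [abs_mul]; ring
    _ ≤ |x| * (|α| + |β|) := by
        exact mul_le_mul_of_nonneg_left h2 (abs_nonneg x)

lemma psi_integrand_cont (hWd : DifferentiableOn ℂ W (S α β)) (hbS : b ∈ S α β)
    {c : ℝ} (h1 : α < c) (h2 : c < β) (x : ℝ) :
    Continuous fun t => dslope W b (line c t) * Complex.exp (-(line c t * x)) := by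
  have hds : DifferentiableOn ℂ (dslope W b) (S α β) :=
    (Complex.differentiableOn_dslope ((isOpen_S α β).mem_nhds hbS)).mpr hWd
  refine (continuous_comp_line hds.continuousOn h1 h2).mul ?_
  exact Complex.continuous_exp.comp ((continuous_line c).mul continuous_const).neg

lemma psi_integrand_integrable (hWd : DifferentiableOn ℂ W (S α β)) (hbS : b ∈ S α β)
    (hε : 0 < ε) (hdec : DecayOn (S α β) W ε) (hb : W b = 0)
    {c : ℝ} (h1 : α < c) (h2 : c < β) (x : ℝ) :
    Integrable fun t => dslope W b (line c t) * Complex.exp (-(line c t * x)) :=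
  integrable_line (psi_integrand_cont hWd hbS h1 h2 x) (show (1:ℝ) < ε + 1 by linarith)
    (psi_integrand_decay hε hdec hb x) h1 h2

/-- shifted representation of `ψ` -/
lemma psiFun_rep (hWd : DifferentiableOn ℂ W (S α β)) (hbS : b ∈ S α β)
    (hε : 0 < ε) (hdec : DecayOn (S α β) W ε) (hb : W b = 0)
    {c c' : ℝ} (hc1 : α < c) (hc2 : c < β) (hbc : b.re < c)
    (h1 : α < c') (h2 : c' < β) (x : ℝ) :
    psiFun c W b (Real.exp x)
      = (2 * (Real.pi : ℂ) * Complex.I * deriv W b)⁻¹ *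
          lineIntegral c' (fun v => dslope W b v * Complex.exp (-(v * x))) := by
  rw [psiFun_eq hbc hb]
  congr 1
  exact lineIntegral_shift' (psi_integrand_diff hWd hbS x) (by linarith : (0:ℝ) < ε + 1)
    (psi_integrand_decay hε hdec hb x) hc1 hc2 h1 h2
    (psi_integrand_integrable hWd hbS hε hdec hb hc1 hc2 x)
    (psi_integrand_integrable hWd hbS hε hdec hb h1 h2 x)

/-- bound `|ψ(eˣ)| ≤ C e^{-c' x}` -/
lemma psiFun_bound (hWd : DifferentiableOn ℂ W (S α β)) (hbS : b ∈ S α β)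
    (hε : 0 < ε) (hdec : DecayOn (S α β) W ε) (hb : W b = 0)
    {c c' : ℝ} (hc1 : α < c) (hc2 : c < β) (hbc : b.re < c)
    (h1 : α < c') (h2 : c' < β) :
    ∃ C : ℝ, 0 ≤ C ∧ ∀ x : ℝ,
      Complex.abs (psiFun c W b (Real.exp x)) ≤ C * Real.exp (-c' * x) := by
  set P := (2 * (Real.pi : ℂ) * Complex.I * deriv W b)⁻¹
  set J := ∫ t : ℝ, Complex.abs (dslope W b (line c' t))
  have hJ : 0 ≤ J := integral_nonneg (fun t => Complex.abs.nonneg _)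
  refine ⟨Complex.abs P * J, mul_nonneg (Complex.abs.nonneg _) hJ, fun x => ?_⟩
  rw [psiFun_rep hWd hbS hε hdec hb hc1 hc2 hbc h1 h2 x, map_mul]
  have hnorm : Complex.abs (lineIntegral c'
      (fun v => dslope W b v * Complex.exp (-(v * x)))) ≤ J * Real.exp (-c' * x) := by
    rw [lineIntegral_eq, map_mul, Complex.abs_I, one_mul]
    have h3 : ∀ t : ℝ, ‖dslope W b (line c' t) * Complex.exp (-(line c' t * x))‖
        = Complex.abs (dslope W b (line c' t)) * Real.exp (-c' * x) := by
      intro t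
      rw [Complex.norm_eq_abs, map_mul, Complex.abs_exp]
      congr 2
      simp
    calc Complex.abs (∫ t : ℝ, dslope W b (line c' t) * Complex.exp (-(line c' t * x)))
        ≤ ∫ t : ℝ, ‖dslope W b (line c' t) * Complex.exp (-(line c' t * x))‖ := by
          rw [← Complex.norm_eq_abs]
          exact norm_integral_le_integral_norm _
      _ = ∫ t : ℝ, Complex.abs (dslope W b (line c' t)) * Real.exp (-c' * x) := by
          simp_rw [h3]
      _ = J * Real.exp (-c' * x) := by
          rw [integral_mul_const]
  refine le_trans (mul_le_mul_of_nonneg_left hnorm (Complex.abs.nonneg _)) (le_of_eq ?_)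
  ring

end PsiSetup

end Biorth

namespace Biorth

lemma integral_cexp_Iic {b : ℂ} (hb : 0 < b.re) :
    ∫ x : ℝ in Iic (0:ℝ), Complex.exp (b * x) = b⁻¹ := by
  have h := integral_comp_neg_Iic (c := (0:ℝ))
    (f := fun y : ℝ => Complex.exp (-(b * y)))
  have h2 : ∀ x : ℝ, Complex.exp (-(b * ((-x : ℝ) : ℂ))) = Complex.exp (b * x) := by
    intro x
    congr 1
    push_cast
    ring
  simp_rw [h2, neg_zero] at h
  rw [h, integral_cexp_Ioi hb]

lemma integrableOn_cexp_Iic {b : ℂ} (hb : 0 < b.re) :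
    IntegrableOn (fun x : ℝ => Complex.exp (b * x)) (Iic 0) := by
  refine Integrable.mono' (integrableOn_exp_mul_Iic hb 0)
    (Continuous.aestronglyMeasurable (by continuity)).restrict ?_
  filter_upwards with x
  rw [Complex.norm_eq_abs, Complex.abs_exp]
  simp

section Fubini

variable {u : ℂ} {G : ℝ → ℂ}

lemma fubini_joint_cont (c : ℝ) (hGcont : Continuous G) :
    Continuous (fun p : ℝ × ℝ => G p.2 * Complex.exp ((u - line c p.2) * p.1)) := by
  refine (hGcont.comp continuous_snd).mul (Complex.continuous_exp.comp ?_)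
  exact (continuous_const.sub ((continuous_line c).comp continuous_snd)).mul
    (Complex.continuous_ofReal.comp continuous_fst)

lemma fubini_norm_eq (c : ℝ) (x t : ℝ) :
    ‖G t * Complex.exp ((u - line c t) * x)‖ = Real.exp ((u.re - c) * x) * ‖G t‖ := by
  rw [norm_mul, Complex.norm_eq_abs (Complex.exp _), Complex.abs_exp]
  have : ((u - line c t) * (x:ℂ)).re = (u.re - c) * x := by
    simp [Complex.mul_re]
  rw [this]
  ring

lemma fubini_Ioi {cp : ℝ} (hre : u.re < cp) (hGcont : Continuous G) (hGint : Integrable G) :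
    ∫ x : ℝ in Ioi (0:ℝ), ∫ t : ℝ, G t * Complex.exp ((u - line cp t) * x)
      = ∫ t : ℝ, G t * (line cp t - u)⁻¹ := by
  have hprod : Integrable
      (Function.uncurry fun (x t : ℝ) => G t * Complex.exp ((u - line cp t) * (x:ℂ)))
      ((volume.restrict (Ioi (0:ℝ))).prod volume) := by
    have hbound1 : IntegrableOn (fun x : ℝ => Real.exp ((u.re - cp) * x)) (Ioi (0:ℝ)) := by
      have h' : IntegrableOn (fun x : ℝ => Real.exp (-(cp - u.re) * x)) (Ioi (0:ℝ)) :=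
        exp_neg_integrableOn_Ioi 0 (by linarith)
      refine h'.congr_fun (fun x _ => ?_) measurableSet_Ioi
      congr 1
      ring
    refine Integrable.mono' (Integrable.mul_prod hbound1 hGint.norm)
      ((fubini_joint_cont cp hGcont).aestronglyMeasurable) ?_
    filter_upwards with p
    rw [Function.uncurry_apply_pair, fubini_norm_eq cp]
  rw [integral_integral_swap hprod]
  have hinner : ∀ t : ℝ, (∫ x : ℝ in Ioi (0:ℝ), G t * Complex.exp ((u - line cp t) * x))
      = G t * (line cp t - u)⁻¹ := by
    intro t
    rw [integral_const_mul]
    congr 1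
    have harg : ∀ x : ℝ, Complex.exp ((u - line cp t) * x)
        = Complex.exp (-((line cp t - u) * x)) := by
      intro x
      congr 1
      ring
    simp_rw [harg]
    refine integral_cexp_Ioi ?_
    have : (line cp t - u).re = cp - u.re := by simp
    rw [this]
    linarith
  simp_rw [hinner]

lemma fubini_Iic {cm : ℝ} (hre : cm < u.re) (hGcont : Continuous G) (hGint : Integrable G) :
    ∫ x : ℝ in Iic (0:ℝ), ∫ t : ℝ, G t * Complex.exp ((u - line cm t) * x)
      = -∫ t : ℝ, G t * (line cm t - u)⁻¹ := by
  have hprod : Integrable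
      (Function.uncurry fun (x t : ℝ) => G t * Complex.exp ((u - line cm t) * (x:ℂ)))
      ((volume.restrict (Iic (0:ℝ))).prod volume) := by
    refine Integrable.mono'
      (Integrable.mul_prod (f := fun x : ℝ => Real.exp ((u.re - cm) * x)) (g := fun t => ‖G t‖)
        (integrableOn_exp_mul_Iic (by linarith) 0) hGint.norm)
      ((fubini_joint_cont cm hGcont).aestronglyMeasurable) ?_
    filter_upwards with p
    rw [Function.uncurry_apply_pair, fubini_norm_eq cm]
  rw [integral_integral_swap hprod]
  have hinner : ∀ t : ℝ, (∫ x : ℝ in Iic (0:ℝ), G t * Complex.exp ((u - line cm t) * x))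
      = -(G t * (line cm t - u)⁻¹) := by
    intro t
    rw [integral_const_mul]
    have hval : (∫ x : ℝ in Iic (0:ℝ), Complex.exp ((u - line cm t) * x))
        = (u - line cm t)⁻¹ := by
      refine integral_cexp_Iic ?_
      have : (u - line cm t).re = u.re - cm := by simp
      rw [this]
      linarith
    rw [hval]
    have : (u - line cm t)⁻¹ = -((line cm t - u)⁻¹) := by
      rw [← inv_neg, neg_sub]
    rw [this]
    ring
  simp_rw [hinner]
  rw [integral_neg]

end Fubini

end Biorth

namespace Biorth

section Conv

variable {α β : ℝ} {W : ℂ → ℂ} {b : ℂ} {ε : ℝ} {c : ℝ}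

lemma psiFun_continuous (hWd : DifferentiableOn ℂ W (S α β)) (hbS : b ∈ S α β)
    (hε : 0 < ε) (hdec : DecayOn (S α β) W ε) (hb : W b = 0)
    (hc1 : α < c) (hc2 : c < β) (hbc : b.re < c) :
    Continuous fun x : ℝ => psiFun c W b (Real.exp x) := by
  have heq : (fun x : ℝ => psiFun c W b (Real.exp x))
      = fun x : ℝ => (2 * (Real.pi : ℂ) * Complex.I * deriv W b)⁻¹ *
          (Complex.I * ∫ t : ℝ, dslope W b (line c t) * Complex.exp (-(line c t * x))) := by
    funext x
    rw [psiFun_eq hbc hb, lineIntegral_eq]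
  rw [heq]
  refine continuous_const.mul (continuous_const.mul ?_)
  rw [continuous_iff_continuousAt]
  intro x₀
  have hint0 : Integrable fun t => dslope W b (line c t) := by
    have := psi_integrand_integrable hWd hbS hε hdec hb hc1 hc2 0
    refine this.congr ?_
    filter_upwards with t
    simp
  refine continuousAt_of_dominated (F := fun (x : ℝ) (t : ℝ) => dslope W b (line c t) *
      Complex.exp (-(line c t * (x:ℂ))))
    (bound := fun t => Complex.abs (dslope W b (line c t)) * Real.exp ((|x₀|+1) * |c|))
    ?_ ?_ ?_ ?_
  · filter_upwards with x
    exact (psi_integrand_cont hWd hbS hc1 hc2 x).aestronglyMeasurable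
  · filter_upwards [Metric.ball_mem_nhds x₀ one_pos] with x hx
    filter_upwards with t
    rw [norm_mul, Complex.norm_eq_abs (Complex.exp _), Complex.abs_exp]
    have h1 : (-(line c t * (x:ℂ))).re = -(c * x) := by simp
    rw [h1, Complex.norm_eq_abs]
    refine mul_le_mul_of_nonneg_left (Real.exp_le_exp.mpr ?_) (Complex.abs.nonneg _)
    have hxx : |x| ≤ |x₀| + 1 := by
      have := mem_ball_iff_norm.mp hx
      rw [Real.norm_eq_abs] at this
      have h2 := abs_sub_abs_le_abs_sub x x₀
      linarith
    calc -(c * x) ≤ |c * x| := neg_le_abs _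
      _ = |x| * |c| := by rw [abs_mul]; ring
      _ ≤ (|x₀| + 1) * |c| := mul_le_mul_of_nonneg_right hxx (abs_nonneg c)
  · exact hint0.norm.mul_const _
  · filter_upwards with t
    refine (continuous_const.mul (Complex.continuous_exp.comp ?_)).continuousAt
    exact (continuous_const.mul Complex.continuous_ofReal).neg

lemma integrable_exp_mul_psi (hWd : DifferentiableOn ℂ W (S α β)) (hbS : b ∈ S α β)
    (hε : 0 < ε) (hdec : DecayOn (S α β) W ε) (hb : W b = 0)
    (hc1 : α < c) (hc2 : c < β) (hbc : b.re < c)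
    {u : ℂ} (hu1 : α < u.re) (hu2 : u.re < c) :
    Integrable fun x : ℝ => Complex.exp (u * x) * psiFun c W b (Real.exp x) := by
  have hcontprod : Continuous fun x : ℝ => Complex.exp (u * x) * psiFun c W b (Real.exp x) := by
    refine Continuous.mul (Complex.continuous_exp.comp ?_)
      (psiFun_continuous hWd hbS hε hdec hb hc1 hc2 hbc)
    exact continuous_const.mul Complex.continuous_ofReal
  have hnormpt : ∀ (C cc : ℝ) (x : ℝ),
      Complex.abs (psiFun c W b (Real.exp x)) ≤ C * Real.exp (-cc * x) →
      ‖Complex.exp (u * x) * psiFun c W b (Real.exp x)‖ ≤ C * Real.exp ((u.re - cc) * x) := by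
    intro C cc x hC
    rw [norm_mul, Complex.norm_eq_abs (Complex.exp _), Complex.abs_exp, Complex.norm_eq_abs]
    have h1 : (u * (x:ℂ)).re = u.re * x := by simp
    rw [h1]
    calc Real.exp (u.re * x) * Complex.abs (psiFun c W b (Real.exp x))
        ≤ Real.exp (u.re * x) * (C * Real.exp (-cc * x)) :=
          mul_le_mul_of_nonneg_left hC (Real.exp_pos _).le
      _ = C * (Real.exp (u.re * x) * Real.exp (-cc * x)) := by ring
      _ = C * Real.exp ((u.re - cc) * x) := by
          rw [← Real.exp_add]
          congr 1
          ring
  rw [← integrableOn_univ, ← Set.Iic_union_Ioi (a := (0:ℝ)), integrableOn_union]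
  constructor
  · -- x ≤ 0, use c' = (α + u.re)/2
    set cm := (α + u.re)/2 with hcmdef
    have hcm1 : α < cm := by rw [hcmdef]; linarith
    have hcm2 : cm < β := by rw [hcmdef]; linarith [hu2, hc2]
    obtain ⟨C, hC0, hC⟩ := psiFun_bound hWd hbS hε hdec hb hc1 hc2 hbc hcm1 hcm2
    have hρ : 0 < u.re - cm := by rw [hcmdef]; linarith
    refine Integrable.mono' ((integrableOn_exp_mul_Iic hρ 0).const_mul C)
      hcontprod.aestronglyMeasurable.restrict ?_
    filter_upwards with x
    have := hnormpt C cm x (hC x)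
    calc ‖Complex.exp (u * x) * psiFun c W b (Real.exp x)‖
        ≤ C * Real.exp ((u.re - cm) * x) := this
      _ = C * Real.exp ((u.re - cm) * x) := rfl
  · -- x ≥ 0, use c' = (c + β)/2
    set cp := (c + β)/2 with hcpdef
    have hcp1 : α < cp := by rw [hcpdef]; linarith
    have hcp2 : cp < β := by rw [hcpdef]; linarith
    obtain ⟨C, hC0, hC⟩ := psiFun_bound hWd hbS hε hdec hb hc1 hc2 hbc hcp1 hcp2
    have hρ : 0 < cp - u.re := by rw [hcpdef]; linarith
    refine Integrable.mono' ((exp_neg_integrableOn_Ioi 0 hρ).const_mul C)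
      hcontprod.aestronglyMeasurable.restrict ?_
    filter_upwards with x
    have h2 := hnormpt C cp x (hC x)
    refine h2.trans (le_of_eq ?_)
    congr 1
    ring

end Conv

end Biorth


theorem biorthogonality_psi
    (N : ℕ) (α β c : ℝ) (W : ℂ → ℂ) (γ : ℝ → ℂ) (a : Fin N → ℂ)
    (hαβ : α < β)
    (hW : AnalyticOnNhd ℂ W {z : ℂ | α < z.re ∧ z.re < β})
    (hWnontriv : ∃ z : ℂ, (α < z.re ∧ z.re < β) ∧ W z ≠ 0)
    (hWdecay : ∃ ε > (0:ℝ), ∃ M R : ℝ, ∀ z : ℂ, α < z.re → z.re < β →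
      R ≤ ‖z‖ → ‖W z‖ ≤ M * ‖z‖ ^ (-ε))
    (hc : α < c ∧ c < β)
    (hγ : ContDiff ℝ 1 γ) (hγloop : γ 0 = γ 1)
    (hγsimple : ∀ s t : ℝ, s ∈ Set.Ico (0:ℝ) 1 → t ∈ Set.Ico (0:ℝ) 1 → γ s = γ t → s = t)
    (hγstrip : ∀ s : ℝ, α < (γ s).re ∧ (γ s).re < c)
    (hzeros : ∀ m, W (a m) = 0)
    (hastrip : ∀ m, α < (a m).re ∧ (a m).re < c)
    (hwind : ∀ m, windingNumber γ (a m) = 1)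
    (hγavoid : ∀ (s : ℝ), W (γ s) ≠ 0)
    (hnoother : ∀ z : ℂ, α < z.re → z.re < β → W z = 0 →
      (∃ m, z = a m) ∨ windingNumber γ z = 0)
    (hdistinct : Function.Injective a)
    (hsimple : ∀ m, deriv W (a m) ≠ 0) :
    -- the decay estimates for `ψ_m(e^x)` at `∓∞`, for every `δ > 0`
    (∀ (m : Fin N) (δ : ℝ), 0 < δ →
      (∃ C X : ℝ, ∀ x : ℝ, x ≤ X →
        ‖psiFun c W (a m) (Real.exp x)‖ ≤ C * Real.exp (-(α + δ) * x)) ∧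
      (∃ C X : ℝ, ∀ x : ℝ, X ≤ x →
        ‖psiFun c W (a m) (Real.exp x)‖ ≤ C * Real.exp (-(β - δ) * x))) ∧
    -- absolute convergence of the biorthogonality integrals
    (∀ m k : Fin N,
      Integrable (fun x : ℝ => Complex.exp (a m * (x : ℂ)) * psiFun c W (a k) (Real.exp x))) ∧
    -- the biorthogonality relations
    (∀ m k : Fin N,
      ∫ x : ℝ, Complex.exp (a m * (x : ℂ)) * psiFun c W (a k) (Real.exp x)
        = if m = k then 1 else 0) := by
  obtain ⟨hcα, hcβ⟩ := hc
  obtain ⟨ε, hε, M, R, hWdecay'⟩ := hWdecay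
  have hWd : DifferentiableOn ℂ W (Biorth.S α β) := hW.differentiableOn
  have hdec : Biorth.DecayOn (Biorth.S α β) W ε := Biorth.DecayOn.of_bound hWdecay'
  have hbS : ∀ k : Fin N, a k ∈ Biorth.S α β :=
    fun k => ⟨(hastrip k).1, lt_trans (hastrip k).2 hcβ⟩
  have hbc : ∀ k : Fin N, (a k).re < c := fun k => (hastrip k).2
  refine ⟨?_, ?_, ?_⟩
  · -- part 1 : decay estimates
    intro m δ hδ
    constructor
    · set c' := min (α + δ) c with hc'def
      have h1 : α < c' := lt_min (by linarith) hcα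
      have h2 : c' < β := lt_of_le_of_lt (min_le_right _ _) hcβ
      obtain ⟨C, hC0, hC⟩ := Biorth.psiFun_bound hWd (hbS m) hε hdec (hzeros m)
        hcα hcβ (hbc m) h1 h2
      refine ⟨C, 0, fun x hx => ?_⟩
      refine (hC x).trans ?_
      refine mul_le_mul_of_nonneg_left (Real.exp_le_exp.mpr ?_) hC0
      have hc' : c' ≤ α + δ := min_le_left _ _
      nlinarith
    · set c' := max (β - δ) c with hc'def
      have h1 : α < c' := lt_of_lt_of_le hcα (le_max_right _ _)
      have h2 : c' < β := max_lt (by linarith) hcβ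
      obtain ⟨C, hC0, hC⟩ := Biorth.psiFun_bound hWd (hbS m) hε hdec (hzeros m)
        hcα hcβ (hbc m) h1 h2
      refine ⟨C, 0, fun x hx => ?_⟩
      refine (hC x).trans ?_
      refine mul_le_mul_of_nonneg_left (Real.exp_le_exp.mpr ?_) hC0
      have hc' : β - δ ≤ c' := le_max_left _ _
      nlinarith
  · -- part 2 : integrability
    intro m k
    exact Biorth.integrable_exp_mul_psi hWd (hbS k) hε hdec (hzeros k) hcα hcβ (hbc k)
      (hastrip m).1 (hastrip m).2
  · -- part 3 : biorthogonality
    intro m k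
    set u := a m with hudef
    set b := a k with hbdef
    have hD : deriv W b ≠ 0 := hsimple k
    set g : ℂ → ℂ := dslope W b with hgdef
    set P : ℂ := (2 * (Real.pi : ℂ) * Complex.I * deriv W b)⁻¹ with hPdef
    set cm := (α + u.re)/2 with hcmdef
    set cp := (c + β)/2 with hcpdef
    have hu1 : α < u.re := (hastrip m).1
    have hu2 : u.re < c := (hastrip m).2
    have hcm1 : α < cm := by rw [hcmdef]; linarith
    have hcm2 : cm < u.re := by rw [hcmdef]; linarith
    have hcmβ : cm < β := by rw [hcmdef]; linarith
    have hcp1 : u.re < cp := by rw [hcpdef]; linarith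
    have hcpα : α < cp := by rw [hcpdef]; linarith
    have hcp2 : cp < β := by rw [hcpdef]; linarith
    have hds : DifferentiableOn ℂ g (Biorth.S α β) :=
      (Complex.differentiableOn_dslope ((Biorth.isOpen_S α β).mem_nhds (hbS k))).mpr hWd
    have hGcont : ∀ c' : ℝ, α < c' → c' < β → Continuous fun t => g (Biorth.line c' t) :=
      fun c' h1 h2 => Biorth.continuous_comp_line hds.continuousOn h1 h2
    have hGint : ∀ c' : ℝ, α < c' → c' < β → Integrable fun t => g (Biorth.line c' t) := by
      intro c' h1 h2
      have := Biorth.psi_integrand_integrable hWd (hbS k) hε hdec (hzeros k) h1 h2 0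
      refine this.congr ?_
      filter_upwards with t
      simp [hgdef, hbdef]
    -- representation
    have hrep : ∀ c' : ℝ, α < c' → c' < β → ∀ x : ℝ,
        Complex.exp (u * x) * psiFun c W b (Real.exp x)
          = P * (Complex.I * ∫ t : ℝ,
              g (Biorth.line c' t) * Complex.exp ((u - Biorth.line c' t) * x)) := by
      intro c' h1 h2 x
      rw [Biorth.psiFun_rep hWd (hbS k) hε hdec (hzeros k) hcα hcβ (hbc k) h1 h2 x,
        Biorth.lineIntegral_eq]
      have hpt : (fun t : ℝ => Complex.exp (u * x) *
            (g (Biorth.line c' t) * Complex.exp (-(Biorth.line c' t * x))))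
          = fun t : ℝ => g (Biorth.line c' t) * Complex.exp ((u - Biorth.line c' t) * x) := by
        funext t
        rw [mul_left_comm, ← Complex.exp_add]
        congr 2
        ring
      calc Complex.exp (u * x) * ((2 * (Real.pi : ℂ) * Complex.I * deriv W b)⁻¹ *
            (Complex.I * ∫ t : ℝ,
              dslope W b (Biorth.line c' t) * Complex.exp (-(Biorth.line c' t * x))))
          = P * (Complex.I * (Complex.exp (u * x) * ∫ t : ℝ,
              g (Biorth.line c' t) * Complex.exp (-(Biorth.line c' t * x)))) := by
            rw [hPdef, hgdef]; ring
        _ = P * (Complex.I * ∫ t : ℝ, Complex.exp (u * x) *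
              (g (Biorth.line c' t) * Complex.exp (-(Biorth.line c' t * x)))) := by
            rw [integral_const_mul]
        _ = P * (Complex.I * ∫ t : ℝ,
              g (Biorth.line c' t) * Complex.exp ((u - Biorth.line c' t) * x)) := by
            rw [hpt]
    have hInt : Integrable fun x : ℝ => Complex.exp (u * x) * psiFun c W b (Real.exp x) :=
      Biorth.integrable_exp_mul_psi hWd (hbS k) hε hdec (hzeros k) hcα hcβ (hbc k) hu1 hu2
    have hsplit : (∫ x : ℝ, Complex.exp (u * x) * psiFun c W b (Real.exp x))
        = (∫ x in Iic (0:ℝ), Complex.exp (u * x) * psiFun c W b (Real.exp x))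
          + ∫ x in Ioi (0:ℝ), Complex.exp (u * x) * psiFun c W b (Real.exp x) := by
      rw [← compl_Iic]
      exact (integral_add_compl measurableSet_Iic hInt).symm
    have hIic : (∫ x in Iic (0:ℝ), Complex.exp (u * x) * psiFun c W b (Real.exp x))
        = P * -(Complex.I * ∫ t : ℝ, g (Biorth.line cm t) * (Biorth.line cm t - u)⁻¹) := by
      have heqf : (fun x : ℝ => Complex.exp (u * x) * psiFun c W b (Real.exp x))
          = fun x : ℝ => P * (Complex.I * ∫ t : ℝ,
              g (Biorth.line cm t) * Complex.exp ((u - Biorth.line cm t) * x)) :=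
        funext (hrep cm hcm1 hcmβ)
      rw [heqf]
      rw [integral_const_mul, integral_const_mul]
      rw [Biorth.fubini_Iic hcm2 (hGcont cm hcm1 hcmβ) (hGint cm hcm1 hcmβ)]
      ring
    have hIoi : (∫ x in Ioi (0:ℝ), Complex.exp (u * x) * psiFun c W b (Real.exp x))
        = P * (Complex.I * ∫ t : ℝ, g (Biorth.line cp t) * (Biorth.line cp t - u)⁻¹) := by
      have heqf : (fun x : ℝ => Complex.exp (u * x) * psiFun c W b (Real.exp x))
          = fun x : ℝ => P * (Complex.I * ∫ t : ℝ,
              g (Biorth.line cp t) * Complex.exp ((u - Biorth.line cp t) * x)) :=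
        funext (hrep cp hcpα hcp2)
      rw [heqf]
      rw [integral_const_mul, integral_const_mul]
      rw [Biorth.fubini_Ioi hcp1 (hGcont cp hcpα hcp2) (hGint cp hcpα hcp2)]
    have hcif := Biorth.lineIntegral_cif hds (show (1:ℝ) < ε + 1 by linarith)
      (hdec.dslope_zero (hzeros k)) (show u ∈ Biorth.S α β from hbS m)
      hcm1 hcm2 hcp1 hcp2
    rw [Biorth.lineIntegral_eq, Biorth.lineIntegral_eq] at hcif
    have hval : (∫ x : ℝ, Complex.exp (u * x) * psiFun c W b (Real.exp x))
        = P * (2 * Real.pi * Complex.I * g u) := by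
      rw [hsplit, hIic, hIoi, ← hcif]
      ring
    rw [show (fun x : ℝ => Complex.exp (a m * (x:ℂ)) * psiFun c W (a k) (Real.exp x))
      = fun x : ℝ => Complex.exp (u * x) * psiFun c W b (Real.exp x) from rfl]
    rw [hval]
    by_cases hmk : m = k
    · rw [if_pos hmk]
      have hub : u = b := by rw [hudef, hbdef, hmk]
      rw [hub, hgdef, dslope_same]
      rw [hPdef]
      have hpi : ((Real.pi : ℂ)) ≠ 0 := Complex.ofReal_ne_zero.mpr Real.pi_ne_zero
      field_simp
    · rw [if_neg hmk]
      have hub : u ≠ b := fun h => hmk (hdistinct h)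
      rw [hgdef, dslope_of_ne W hub, slope_def_field, hzeros m, hzeros k]
      simp

end
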